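/- The point P₇ = (1-b², b², z₅) with z₅ = (1-β+γ)/(1+α-β+γ) is a critical point of the event-horizon autonomous system (assuming 0 < b ≤ 1, 1+α-β+γ ≠ 0, 0 ≤ z₅ < 1). -/

import Mathlib

/-- Vector field of the Model 2 autonomous system with future event horizon IR cutoff. -/
noncomputable def Gev (α β γ b : ℝ) (p : ℝ × ℝ × ℝ) : ℝ × ℝ × ℝ :=
  let x := p.1; let y := p.2.1; let z := p.2.2
  (x * ((1 + 3 * β - 3 * γ + 3 * α * z / (1 - z)) * (1 - x)
        - 2 * y * (1 + Real.sqrt y / b)),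
   y * (2 * (1 - y) * (1 + Real.sqrt y / b)
        - x * (1 + 3 * β - 3 * γ + 3 * α * z / (1 - z))),
   z * (1 - z) / 2 *
     (4 - 2 * y * (1 + Real.sqrt y / b)
        - x * (1 + 3 * β - 3 * γ + 3 * α * z / (1 - z))))

theorem P7_critical_point (α β γ b : ℝ) (hb0 : 0 < b) (hb1 : b ≤ 1)
    (hden : 1 + α - β + γ ≠ 0)
    (hz0 : 0 ≤ (1 - β + γ) / (1 + α - β + γ))
    (hz1 : (1 - β + γ) / (1 + α - β + γ) < 1) :
    Gev α β γ b (1 - b ^ 2, b ^ 2, (1 - β + γ) / (1 + α - β + γ)) = 0 := by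
  have hα : α ≠ 0 := by
    intro h
    subst h
    norm_num at hz1 hden
    rw [div_self hden] at hz1
    exact lt_irrefl 1 hz1
  set z : ℝ := (1 - β + γ) / (1 + α - β + γ) with hz
  have h1z : 1 - z = α / (1 + α - β + γ) := by
    rw [hz]; field_simp; ring
  have hzr : z / (1 - z) = (1 - β + γ) / α := by
    rw [h1z, hz]
    field_simp
  have hA : 1 + 3 * β - 3 * γ + 3 * α * z / (1 - z) = 4 := by
    rw [mul_div_assoc, hzr]
    field_simp
    ring
  have hsq : Real.sqrt (b ^ 2) = b := Real.sqrt_sq hb0.le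
  have hy : 2 * b ^ 2 * (1 + Real.sqrt (b ^ 2) / b) = 4 * b ^ 2 := by
    rw [hsq, div_self hb0.ne']; ring
  have hds : Real.sqrt (b ^ 2) / b = 1 := by rw [hsq, div_self hb0.ne']
  simp only [Gev, hA, hds]
  refine Prod.ext ?_ (Prod.ext ?_ ?_) <;> simp [hds] <;> exact Or.inr (by ring)
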